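/- Define f(w) = Im(conj(w)·√(D_p(w)))/Im(w) for w ∈ ℂ ∖ (I_p ∪ ℝ); this equals (conj(w)√(D_p(w)) − w√(D_p(conj(w))))/(w − conj(w)). Then f is continuous on ℂ ∖ (I_p ∪ ℝ), and the function obtained by additionally setting f(t) = (−(1−2a)𝒜t − 1)/√(D_p(t)) for t ∈ ℝ is continuous on ℂ ∖ I_p. For w₀ ∈ I_p, the limit of f(w) as w → w₀ from the right equals −(1−2a)√(−D_p(w₀))/(𝒜·|Im(w₀)|) and the limit from the left equals +(1−2a)√(−D_p(w₀))/(𝒜·|Im(w₀)|); in particular these two one-sided limits agree if and only if a = 1/2. When a = 1/2, the function extended by f ≡ 0 on I_p (and by the above formula on ℝ) is continuous on all of ℂ. -/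

import Mathlib

open Set Filter Complex

lemma aux_sq (z : ℂ) (hz : z ≠ 0) : z ^ ((1:ℂ)/2) * z ^ ((1:ℂ)/2) = z := by
  rw [← Complex.cpow_add _ _ hz]; norm_num

lemma aux_re_sqrt (z : ℂ) : (z ^ ((1:ℂ)/2)).re = Real.sqrt ((‖z‖ + z.re)/2) := by
  rw [one_div, Complex.cpow_inv_two_re]

lemma aux_tendsto_pos {s : ℝ} (hs : 0 < s) :
    Tendsto (fun z : ℂ => z ^ ((1:ℂ)/2)) (nhdsWithin (↑(-s)) {z : ℂ | 0 < z.im})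
      (nhds (Complex.I * Real.sqrt s)) := by
  have hne : ((-s : ℝ) : ℂ) ≠ 0 := by
    simp [hs.ne']
  have h1 : Tendsto Complex.log (nhdsWithin (↑(-s)) {z : ℂ | 0 < z.im})
      (nhds (Real.log s + Real.pi * Complex.I)) := by
    have := Complex.tendsto_log_nhdsWithin_im_nonneg_of_re_neg_of_im_zero
      (z := ((-s : ℝ) : ℂ)) (by simpa using hs) (by simp)
    have habs : ‖((-s : ℝ) : ℂ)‖ = s := by
      simp [abs_of_pos hs]
    rw [habs] at this
    exact this.mono_left (nhdsWithin_mono _ (fun z hz => le_of_lt (show 0 < z.im from hz)))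
  have h2 : Tendsto (fun z : ℂ => Complex.exp (Complex.log z * (1/2)))
      (nhdsWithin (↑(-s)) {z : ℂ | 0 < z.im})
      (nhds (Complex.exp ((Real.log s + Real.pi * Complex.I) * (1/2)))) :=
    (Complex.continuous_exp.continuousAt.tendsto.comp (h1.mul_const _))
  have heq : Complex.exp ((Real.log s + Real.pi * Complex.I) * (1/2))
      = Complex.I * Real.sqrt s := by
    rw [add_mul, Complex.exp_add]
    have : (Real.pi : ℂ) * Complex.I * (1/2) = (Real.pi/2 : ℝ) * Complex.I := by
      push_cast; ring
    rw [this, Complex.exp_mul_I]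
    have : ((Real.log s : ℂ) * (1/2)) = ((Real.log s / 2 : ℝ) : ℂ) := by push_cast; ring
    rw [this, ← Complex.ofReal_cos, ← Complex.ofReal_sin, Real.cos_pi_div_two,
      Real.sin_pi_div_two, ← Complex.ofReal_exp]
    rw [show Real.log s / 2 = Real.log s * (1/2) by ring, Real.exp_mul, Real.exp_log hs]
    rw [← Real.sqrt_eq_rpow]
    push_cast; ring
  rw [heq] at h2
  refine h2.congr' ?_
  filter_upwards [eventually_nhdsWithin_of_eventually_nhds
    (eventually_ne_nhds hne)] with z hz
  rw [Complex.cpow_def_of_ne_zero hz]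

lemma aux_tendsto_neg {s : ℝ} (hs : 0 < s) :
    Tendsto (fun z : ℂ => z ^ ((1:ℂ)/2)) (nhdsWithin (↑(-s)) {z : ℂ | z.im < 0})
      (nhds (-(Complex.I * Real.sqrt s))) := by
  have hne : ((-s : ℝ) : ℂ) ≠ 0 := by simp [hs.ne']
  have h1 : Tendsto Complex.log (nhdsWithin (↑(-s)) {z : ℂ | z.im < 0})
      (nhds (Real.log s - Real.pi * Complex.I)) := by
    have := Complex.tendsto_log_nhdsWithin_im_neg_of_re_neg_of_im_zero
      (z := ((-s : ℝ) : ℂ)) (by simpa using hs) (by simp)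
    have habs : ‖((-s : ℝ) : ℂ)‖ = s := by simp [abs_of_pos hs]
    rw [habs] at this
    exact this
  have h2 : Tendsto (fun z : ℂ => Complex.exp (Complex.log z * (1/2)))
      (nhdsWithin (↑(-s)) {z : ℂ | z.im < 0})
      (nhds (Complex.exp ((Real.log s - Real.pi * Complex.I) * (1/2)))) :=
    (Complex.continuous_exp.continuousAt.tendsto.comp (h1.mul_const _))
  have heq : Complex.exp ((Real.log s - Real.pi * Complex.I) * (1/2))
      = -(Complex.I * Real.sqrt s) := by
    rw [sub_mul, Complex.exp_sub]
    have : (Real.pi : ℂ) * Complex.I * (1/2) = (Real.pi/2 : ℝ) * Complex.I := by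
      push_cast; ring
    rw [this, Complex.exp_mul_I]
    have : ((Real.log s : ℂ) * (1/2)) = ((Real.log s / 2 : ℝ) : ℂ) := by push_cast; ring
    rw [this, ← Complex.ofReal_cos, ← Complex.ofReal_sin, Real.cos_pi_div_two,
      Real.sin_pi_div_two, ← Complex.ofReal_exp]
    rw [show Real.log s / 2 = Real.log s * (1/2) by ring, Real.exp_mul, Real.exp_log hs]
    rw [← Real.sqrt_eq_rpow]
    push_cast
    rw [div_eq_mul_inv]
    ring_nf
    rw [Complex.inv_I]
    ring
  rw [heq] at h2
  refine h2.congr' ?_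
  filter_upwards [eventually_nhdsWithin_of_eventually_nhds
    (eventually_ne_nhds hne)] with z hz
  rw [Complex.cpow_def_of_ne_zero hz]

set_option maxHeartbeats 1600000 in
theorem stmt4 (a α α' : ℝ) (ha : a ∈ Ioo (0 : ℝ) 1) (hαα : α ≠ α')
    (𝒜 : ℝ) (h𝒜 : 𝒜 = α' - α)
    (Dp : ℂ → ℂ)
    (hDp : ∀ w : ℂ, Dp w = ((𝒜 : ℂ) * w + ((1 - 2 * a : ℝ) : ℂ)) ^ 2 + ((4 * a * (1 - a) : ℝ) : ℂ))
    (Ip : Set ℂ)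
    (hIp : Ip = {w : ℂ | w.re = -(1 - 2 * a) / 𝒜 ∧ 2 * Real.sqrt (a * (1 - a)) / |𝒜| < |w.im|})
    (F : ℂ → ℝ)
    -- F(w) = Im(conj(w)·√(D_p(w)))/Im(w) off the real axis
    (hF : ∀ w : ℂ, w.im ≠ 0 → F w = ((starRingEnd ℂ) w * (Dp w) ^ ((1 : ℂ) / 2)).im / w.im)
    -- the continuous extension to ℝ
    (hFR : ∀ t : ℝ, F (t : ℂ) =
      (-(1 - 2 * a) * 𝒜 * t - 1) / Real.sqrt ((𝒜 * t + (1 - 2 * a)) ^ 2 + 4 * a * (1 - a))) :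
    -- the quotient identity
    (∀ w : ℂ, w.im ≠ 0 → w ∉ Ip →
      ((F w : ℝ) : ℂ) =
        ((starRingEnd ℂ) w * (Dp w) ^ ((1 : ℂ) / 2) - w * (Dp ((starRingEnd ℂ) w)) ^ ((1 : ℂ) / 2)) /
          (w - (starRingEnd ℂ) w))
    -- continuity off I_p ∪ ℝ
    ∧ ContinuousOn F (Ip ∪ {w : ℂ | w.im = 0})ᶜ
    -- the extension is continuous off I_p
    ∧ ContinuousOn F Ipᶜ
    -- one-sided limits at I_p
    ∧ (∀ w₀ ∈ Ip,
        Tendsto F (nhdsWithin w₀ ({w : ℂ | w₀.re < w.re} ∩ (Ip ∪ {w : ℂ | w.im = 0})ᶜ))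
          (nhds (-(1 - 2 * a) * Real.sqrt (-(Dp w₀).re) / (𝒜 * |w₀.im|)))
        ∧ Tendsto F (nhdsWithin w₀ ({w : ℂ | w.re < w₀.re} ∩ (Ip ∪ {w : ℂ | w.im = 0})ᶜ))
          (nhds ((1 - 2 * a) * Real.sqrt (-(Dp w₀).re) / (𝒜 * |w₀.im|))))
    -- the one-sided limits agree iff a = 1/2
    ∧ (∀ w₀ ∈ Ip,
        (-(1 - 2 * a) * Real.sqrt (-(Dp w₀).re) / (𝒜 * |w₀.im|)
          = (1 - 2 * a) * Real.sqrt (-(Dp w₀).re) / (𝒜 * |w₀.im|)) ↔ a = 1 / 2)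
    -- if a = 1/2, the extension by 0 on I_p is continuous on all of ℂ
    ∧ (a = 1 / 2 → ∀ G : ℂ → ℝ, (∀ w ∉ Ip, G w = F w) → (∀ w ∈ Ip, G w = 0) →
        Continuous G) := by
  have ha0 := ha.1
  have ha1 := ha.2
  have h𝒜0 : 𝒜 ≠ 0 := by rw [h𝒜]; exact sub_ne_zero.2 (Ne.symm hαα)
  have hr : 0 < 4 * a * (1 - a) := by nlinarith
  have hre : ∀ w : ℂ, (Dp w).re
      = (𝒜 * w.re + (1 - 2 * a)) ^ 2 - 𝒜 ^ 2 * w.im ^ 2 + 4 * a * (1 - a) := by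
    intro w
    rw [hDp]
    simp [pow_two, Complex.add_re, Complex.add_im, Complex.mul_re, Complex.mul_im]
    ring
  have him : ∀ w : ℂ, (Dp w).im = 2 * 𝒜 * w.im * (𝒜 * w.re + (1 - 2 * a)) := by
    intro w
    rw [hDp]
    simp [pow_two, Complex.add_re, Complex.add_im, Complex.mul_re, Complex.mul_im]
    ring
  -- square-root facts about Ip pre-work
  have hb : (2 * Real.sqrt (a * (1 - a))) ^ 2 = 4 * a * (1 - a) := by
    rw [mul_pow, Real.sq_sqrt (by nlinarith)]; ring
  have hmem : ∀ w : ℂ, w ∈ Ip ↔ ((Dp w).im = 0 ∧ (Dp w).re < 0) := by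
    intro w
    rw [hIp]
    simp only [mem_setOf_eq, hre, him]
    constructor
    · rintro ⟨h1, h2⟩
      have hx : 𝒜 * w.re + (1 - 2 * a) = 0 := by
        rw [h1]; field_simp; ring
      refine ⟨by rw [hx]; ring, ?_⟩
      rw [hx]
      have h3 : 2 * Real.sqrt (a * (1 - a)) < |𝒜| * |w.im| := by
        rw [div_lt_iff₀ (abs_pos.2 h𝒜0)] at h2
        linarith [h2]
      have h4 : (2 * Real.sqrt (a * (1 - a))) ^ 2 < (|𝒜| * |w.im|) ^ 2 := by
        have := mul_self_nonneg (2 * Real.sqrt (a * (1 - a)))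
        nlinarith [Real.sqrt_nonneg (a * (1 - a)), abs_nonneg 𝒜, abs_nonneg w.im]
      rw [hb] at h4
      have h5 : (|𝒜| * |w.im|) ^ 2 = 𝒜 ^ 2 * w.im ^ 2 := by
        rw [mul_pow, _root_.sq_abs, _root_.sq_abs]
      nlinarith
    · rintro ⟨h1, h2⟩
      have him0 : w.im ≠ 0 := by
        intro h
        rw [h] at h2
        nlinarith [sq_nonneg (𝒜 * w.re + (1 - 2 * a))]
      have hx : 𝒜 * w.re + (1 - 2 * a) = 0 := by
        rcases mul_eq_zero.1 h1 with h | h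
        · rcases mul_eq_zero.1 h with h' | h'
          · exact absurd h' (by positivity)
          · exact absurd h' him0
        · exact h
      constructor
      · field_simp at hx ⊢
        linarith
      · rw [hx] at h2
        rw [div_lt_iff₀ (abs_pos.2 h𝒜0)]
        have h4 : 4 * a * (1 - a) < 𝒜 ^ 2 * w.im ^ 2 := by nlinarith
        nlinarith [Real.sqrt_nonneg (a * (1 - a)), abs_nonneg w.im, abs_nonneg 𝒜,
          _root_.sq_abs 𝒜, _root_.sq_abs w.im, hb, mul_pos (abs_pos.2 h𝒜0) (abs_pos.2 him0)]
  have hDpc : Continuous Dp := by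
    have : Dp = fun w => ((𝒜 : ℂ) * w + ((1 - 2 * a : ℝ) : ℂ)) ^ 2 + ((4 * a * (1 - a) : ℝ) : ℂ) :=
      funext hDp
    rw [this]; continuity
  have hconjDp : ∀ w : ℂ, Dp ((starRingEnd ℂ) w) = (starRingEnd ℂ) (Dp w) := by
    intro w
    rw [hDp, hDp]
    simp only [map_add, map_pow, map_mul, Complex.conj_ofReal]
  have hcg : ∀ w ∉ Ip, (starRingEnd ℂ) (Dp w ^ ((1:ℂ)/2)) = Dp ((starRingEnd ℂ) w) ^ ((1:ℂ)/2) := by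
    intro w hw
    rw [hconjDp]
    have harg : (Dp w).arg ≠ Real.pi := by
      intro h
      rw [Complex.arg_eq_pi_iff] at h
      exact hw ((hmem w).2 ⟨h.2, h.1⟩)
    rw [Complex.conj_cpow _ _ harg]
    congr 2
    simp [Complex.ext_iff]
  have hgc : ∀ w ∉ Ip, ContinuousAt (fun u => Dp u ^ ((1:ℂ)/2)) w := by
    intro w hw
    have h1 : 0 ≤ (Dp w).re ∨ (Dp w).im ≠ 0 := by
      by_contra h
      push_neg at h
      exact hw ((hmem w).2 ⟨h.2, h.1⟩)
    exact (Complex.continuousAt_cpow_const_of_re_pos h1 (by norm_num)).comp hDpc.continuousAt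
  have hopenim : IsOpen {u : ℂ | u.im ≠ 0} := isOpen_compl_singleton.preimage Complex.continuous_im
  have hFcont_nonreal : ∀ w : ℂ, w.im ≠ 0 → w ∉ Ip → ContinuousAt F w := by
    intro w him0 hw
    have hev : F =ᶠ[nhds w] fun u => (((starRingEnd ℂ) u) * (Dp u ^ ((1:ℂ)/2))).im / u.im := by
      filter_upwards [hopenim.mem_nhds him0] with u hu using hF u hu
    rw [continuousAt_congr hev]
    exact ContinuousAt.div
      (Complex.continuous_im.continuousAt.comp
        (((continuous_conj.continuousAt : ContinuousAt (starRingEnd ℂ) w)).mul (hgc w hw)))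
      Complex.continuous_im.continuousAt him0
  have hRepos : ∀ u : ℂ, 0 < (Dp u).re → 0 < (Dp u ^ ((1:ℂ)/2)).re := by
    intro u hu
    rw [one_div, Complex.cpow_inv_two_re]
    apply Real.sqrt_pos.2
    have := Complex.re_le_norm (Dp u)
    linarith
  have hkey : ∀ u : ℂ, 0 < (Dp u).re →
      F u = u.re * 𝒜 * (𝒜 * u.re + (1 - 2*a)) / (Dp u ^ ((1:ℂ)/2)).re
        - (Dp u ^ ((1:ℂ)/2)).re := by
    intro u hu
    have hR := hRepos u hu
    by_cases him0 : u.im = 0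
    · obtain ⟨t, rfl⟩ : ∃ t : ℝ, u = (t : ℂ) := ⟨u.re, by apply Complex.ext <;> simp [him0]⟩
      have hDreal : Dp (t:ℂ) = ((((𝒜 * t + (1 - 2*a))^2 + 4*a*(1-a) : ℝ)) : ℂ) := by
        rw [hDp]
        push_cast
        ring
      have hDnn : (0:ℝ) ≤ (𝒜 * t + (1 - 2*a))^2 + 4*a*(1-a) := by positivity
      have hpow : Dp (t:ℂ) ^ ((1:ℂ)/2)
          = ((Real.sqrt ((𝒜 * t + (1 - 2*a))^2 + 4*a*(1-a)) : ℝ) : ℂ) := by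
        rw [hDreal, show ((1:ℂ)/2) = (((1/2:ℝ)) : ℂ) by norm_num,
          ← Complex.ofReal_cpow hDnn, Real.sqrt_eq_rpow]
      have hS0 : 0 < Real.sqrt ((𝒜 * t + (1 - 2*a))^2 + 4*a*(1-a)) :=
        Real.sqrt_pos.2 (by positivity)
      have hSS' : Real.sqrt ((𝒜 * t + (1 - 2*a))^2 + 4*a*(1-a))
            * Real.sqrt ((𝒜 * t + (1 - 2*a))^2 + 4*a*(1-a))
          = (𝒜 * t + (1 - 2*a))^2 + 4*a*(1-a) := Real.mul_self_sqrt hDnn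
      rw [hFR t, hpow, Complex.ofReal_re, Complex.ofReal_re]
      have hstep : t * 𝒜 * (𝒜 * t + (1 - 2*a)) / Real.sqrt ((𝒜 * t + (1 - 2*a))^2 + 4*a*(1-a))
            - Real.sqrt ((𝒜 * t + (1 - 2*a))^2 + 4*a*(1-a))
          = (t * 𝒜 * (𝒜 * t + (1 - 2*a))
              - Real.sqrt ((𝒜 * t + (1 - 2*a))^2 + 4*a*(1-a))
                * Real.sqrt ((𝒜 * t + (1 - 2*a))^2 + 4*a*(1-a)))
            / Real.sqrt ((𝒜 * t + (1 - 2*a))^2 + 4*a*(1-a)) := by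
        field_simp
      rw [hstep, hSS']
      congr 1
      ring
    · rw [hF u him0]
      have hDne : Dp u ≠ 0 := by
        intro h
        rw [h] at hu
        simp at hu
      have hsq := aux_sq (Dp u) hDne
      have hIm2 : 2 * (Dp u ^ ((1:ℂ)/2)).re * (Dp u ^ ((1:ℂ)/2)).im = (Dp u).im := by
        conv_rhs => rw [← hsq]
        simp [Complex.mul_im]
        ring
      have hM : (Dp u ^ ((1:ℂ)/2)).im
          = 𝒜 * u.im * (𝒜 * u.re + (1 - 2*a)) / (Dp u ^ ((1:ℂ)/2)).re := by
        rw [eq_div_iff hR.ne']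
        rw [him] at hIm2
        linear_combination hIm2/2
      have hmul : ((starRingEnd ℂ) u * (Dp u ^ ((1:ℂ)/2))).im
          = u.re * (Dp u ^ ((1:ℂ)/2)).im - u.im * (Dp u ^ ((1:ℂ)/2)).re := by
        simp [Complex.mul_im]
        ring
      rw [hmul, hM]
      field_simp
  have hFcont_real : ∀ w : ℂ, w.im = 0 → ContinuousAt F w := by
    intro w him0
    have hDre : 0 < (Dp w).re := by
      rw [hre, him0]
      nlinarith [sq_nonneg (𝒜 * w.re + (1 - 2*a))]
    have hU : IsOpen {u : ℂ | 0 < (Dp u).re} :=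
      isOpen_lt continuous_const (Complex.continuous_re.comp hDpc)
    have hev : F =ᶠ[nhds w] fun u => u.re * 𝒜 * (𝒜 * u.re + (1 - 2*a)) / (Dp u ^ ((1:ℂ)/2)).re
        - (Dp u ^ ((1:ℂ)/2)).re := by
      filter_upwards [hU.mem_nhds hDre] with u hu using hkey u hu
    rw [continuousAt_congr hev]
    have hwIp : w ∉ Ip := fun h => absurd hDre (not_lt.2 ((hmem w).1 h).2.le)
    have hRc : ContinuousAt (fun u => (Dp u ^ ((1:ℂ)/2)).re) w :=
      Complex.continuous_re.continuousAt.comp (hgc w hwIp)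
    exact (ContinuousAt.div
      ((by fun_prop : Continuous fun u : ℂ => u.re * 𝒜 * (𝒜 * u.re + (1 - 2*a))).continuousAt)
      hRc (hRepos w hDre).ne').sub hRc
  have hmain : ∀ w₀ ∈ Ip, ∀ ε : ℝ, ε = 1 ∨ ε = -1 →
      Tendsto F (nhdsWithin w₀ ({w : ℂ | 0 < ε * (w.re - w₀.re)} ∩ (Ip ∪ {w : ℂ | w.im = 0})ᶜ))
        (nhds (ε * w₀.re * Real.sqrt (-(Dp w₀).re) / |w₀.im|)) := by
    intro w₀ hw₀ ε hε
    have hε2 : ε * ε = 1 := by rcases hε with h | h <;> rw [h] <;> norm_num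
    have hw₀' := hw₀
    rw [hIp] at hw₀'
    obtain ⟨hx₀, hy₀⟩ := hw₀'
    have hDim0 : (Dp w₀).im = 0 := ((hmem w₀).1 hw₀).1
    have hDre0 : (Dp w₀).re < 0 := ((hmem w₀).1 hw₀).2
    have hs : 0 < -(Dp w₀).re := neg_pos.2 hDre0
    have hy0ne : w₀.im ≠ 0 := by
      intro h
      rw [h] at hy₀
      simp only [abs_zero] at hy₀
      have : (0:ℝ) ≤ 2 * Real.sqrt (a * (1 - a)) / |𝒜| := by positivity
      linarith
    have hx0' : 𝒜 * w₀.re + (1 - 2*a) = 0 := by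
      rw [hx₀]
      field_simp
      ring
    set S := {w : ℂ | 0 < ε * (w.re - w₀.re)} ∩ (Ip ∪ {w : ℂ | w.im = 0})ᶜ with hS
    have ev1 : ∀ᶠ w in nhdsWithin w₀ S, w ∈ S := eventually_mem_nhdsWithin
    have hposmem : (0:ℝ) < w₀.im * w₀.im := mul_self_pos.2 hy0ne
    have ev2 : ∀ᶠ w in nhdsWithin w₀ S, 0 < w.im * w₀.im := by
      have hop : IsOpen {w : ℂ | 0 < w.im * w₀.im} :=
        isOpen_lt continuous_const (by fun_prop)
      exact eventually_nhdsWithin_of_eventually_nhds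
        (Filter.eventually_of_mem (hop.mem_nhds hposmem) (fun w hw => hw))
    have evsign : ∀ᶠ w in nhdsWithin w₀ S, 0 < (Dp w).im * (ε * w₀.im) := by
      filter_upwards [ev1, ev2] with w hw hw2
      have h1 : 0 < ε * (w.re - w₀.re) := hw.1
      have h2 : (Dp w).im = 2 * 𝒜^2 * w.im * (w.re - w₀.re) := by
        rw [him]
        have : 𝒜 * w.re + (1 - 2*a) = 𝒜 * (w.re - w₀.re) := by
          rw [mul_sub]
          linarith [hx0']
        rw [this]
        ring
      rw [h2]
      have h𝒜2 : 0 < 𝒜^2 := lt_of_le_of_ne (sq_nonneg 𝒜) (Ne.symm (pow_ne_zero 2 h𝒜0))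
      have h3 : 0 < 𝒜^2 * (w.im * w₀.im) * (ε * (w.re - w₀.re)) :=
        mul_pos (mul_pos h𝒜2 hw2) h1
      nlinarith [h3]
    have evim : ∀ᶠ w in nhdsWithin w₀ S, w.im ≠ 0 := by
      filter_upwards [ev2] with w hw2
      intro h
      rw [h] at hw2
      simp at hw2
    have hDpt : Dp w₀ = ((-(-(Dp w₀).re) : ℝ) : ℂ) := by
      apply Complex.ext
      · simp
      · simp [hDim0]
    have tconj : Tendsto (fun w => (starRingEnd ℂ) w) (nhdsWithin w₀ S)
        (nhds ((starRingEnd ℂ) w₀)) :=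
      (continuous_conj.tendsto w₀).mono_left nhdsWithin_le_nhds
    have tden : Tendsto (fun w : ℂ => w.im) (nhdsWithin w₀ S) (nhds w₀.im) :=
      (Complex.continuous_im.tendsto w₀).mono_left nhdsWithin_le_nhds
    rcases lt_or_gt_of_ne (mul_ne_zero (by rcases hε with h|h <;> rw [h] <;> norm_num) hy0ne :
        ε * w₀.im ≠ 0).symm with hsgn | hsgn
    · -- 0 < ε * w₀.im : Dp goes to upper half plane
      have evD : ∀ᶠ w in nhdsWithin w₀ S, Dp w ∈ {z : ℂ | 0 < z.im} := by
        filter_upwards [evsign] with w hw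
        show 0 < (Dp w).im
        rcases mul_pos_iff.1 hw with ⟨h, _⟩ | ⟨_, h⟩
        · exact h
        · linarith
      have hDW : Tendsto Dp (nhdsWithin w₀ S)
          (nhdsWithin (((-(-(Dp w₀).re) : ℝ) : ℂ)) {z : ℂ | 0 < z.im}) := by
        rw [tendsto_nhdsWithin_iff]
        exact ⟨hDpt ▸ (hDpc.continuousAt.tendsto).mono_left nhdsWithin_le_nhds, evD⟩
      have hglim : Tendsto (fun w => Dp w ^ ((1:ℂ)/2)) (nhdsWithin w₀ S)
          (nhds (Complex.I * (Real.sqrt (-(Dp w₀).re) : ℝ))) :=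
        (aux_tendsto_pos hs).comp hDW
      have tall : Tendsto (fun w : ℂ => ((starRingEnd ℂ) w * (Dp w ^ ((1:ℂ)/2))).im / w.im)
          (nhdsWithin w₀ S)
          (nhds (((starRingEnd ℂ) w₀ * (Complex.I * (Real.sqrt (-(Dp w₀).re) : ℝ))).im / w₀.im)) :=
        (((Complex.continuous_im.tendsto _).comp (tconj.mul hglim)).div tden hy0ne)
      have hval : ((starRingEnd ℂ) w₀ * (Complex.I * (Real.sqrt (-(Dp w₀).re) : ℝ))).im / w₀.im
          = ε * w₀.re * Real.sqrt (-(Dp w₀).re) / |w₀.im| := by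
        have habs : |w₀.im| = ε * w₀.im := by
          rcases hε with h | h <;> subst h
          · rw [abs_of_pos (by linarith)]; ring
          · rw [abs_of_neg (by linarith)]; ring
        simp only [Complex.mul_im, Complex.mul_re, Complex.I_re, Complex.I_im,
          Complex.ofReal_re, Complex.ofReal_im]
        rw [habs, div_eq_div_iff hy0ne hsgn.ne']
        simp only [Complex.conj_re, Complex.conj_im]
        ring
      rw [hval] at tall
      apply tall.congr'
      filter_upwards [evim] with w hw
      exact (hF w hw).symm
    · -- ε * w₀.im < 0 : Dp goes to lower half plane
      have evD : ∀ᶠ w in nhdsWithin w₀ S, Dp w ∈ {z : ℂ | z.im < 0} := by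
        filter_upwards [evsign] with w hw
        show (Dp w).im < 0
        rcases mul_pos_iff.1 hw with ⟨_, h⟩ | ⟨h, _⟩
        · linarith
        · exact h
      have hDW : Tendsto Dp (nhdsWithin w₀ S)
          (nhdsWithin (((-(-(Dp w₀).re) : ℝ) : ℂ)) {z : ℂ | z.im < 0}) := by
        rw [tendsto_nhdsWithin_iff]
        exact ⟨hDpt ▸ (hDpc.continuousAt.tendsto).mono_left nhdsWithin_le_nhds, evD⟩
      have hglim : Tendsto (fun w => Dp w ^ ((1:ℂ)/2)) (nhdsWithin w₀ S)
          (nhds (-(Complex.I * (Real.sqrt (-(Dp w₀).re) : ℝ)))) :=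
        (aux_tendsto_neg hs).comp hDW
      have tall : Tendsto (fun w : ℂ => ((starRingEnd ℂ) w * (Dp w ^ ((1:ℂ)/2))).im / w.im)
          (nhdsWithin w₀ S)
          (nhds (((starRingEnd ℂ) w₀ * (-(Complex.I * (Real.sqrt (-(Dp w₀).re) : ℝ)))).im / w₀.im)) :=
        (((Complex.continuous_im.tendsto _).comp (tconj.mul hglim)).div tden hy0ne)
      have hval : ((starRingEnd ℂ) w₀ * (-(Complex.I * (Real.sqrt (-(Dp w₀).re) : ℝ)))).im / w₀.im
          = ε * w₀.re * Real.sqrt (-(Dp w₀).re) / |w₀.im| := by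
        have habs : |w₀.im| = -(ε * w₀.im) := by
          rcases hε with h | h <;> subst h
          · rw [abs_of_neg (by linarith)]; ring
          · rw [abs_of_pos (by nlinarith)]; ring
        simp only [Complex.neg_im, Complex.neg_re, Complex.mul_im, Complex.mul_re,
          Complex.I_re, Complex.I_im, Complex.ofReal_re, Complex.ofReal_im]
        rw [habs, div_eq_div_iff hy0ne (by intro h; rw [← neg_zero, neg_inj] at h; nlinarith : -(ε * w₀.im) ≠ 0)]
        simp only [Complex.conj_re, Complex.conj_im]
        ring
      rw [hval] at tall
      apply tall.congr'
      filter_upwards [evim] with w hw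
      exact (hF w hw).symm
  have part3 : ContinuousOn F Ipᶜ := by
    intro w hw
    by_cases him0 : w.im = 0
    · exact (hFcont_real w him0).continuousWithinAt
    · exact (hFcont_nonreal w him0 hw).continuousWithinAt
  refine ⟨?_, ?_, part3, ?_, ?_, ?_⟩
  · -- quotient identity
    intro w him0 hw
    rw [hF w him0]
    have hconj : (starRingEnd ℂ) ((starRingEnd ℂ) w * (Dp w ^ ((1:ℂ)/2)))
        = w * (Dp ((starRingEnd ℂ) w) ^ ((1:ℂ)/2)) := by
      rw [map_mul, Complex.conj_conj, hcg w hw]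
    rw [← hconj, Complex.sub_conj, Complex.sub_conj,
      mul_div_mul_right _ _ Complex.I_ne_zero, ← Complex.ofReal_div]
    norm_cast
    rw [mul_div_mul_left _ _ (two_ne_zero)]
  · exact part3.mono (compl_subset_compl.2 subset_union_left)
  · -- one-sided limits
    intro w₀ hw₀
    have hw₀' := hw₀
    rw [hIp] at hw₀'
    constructor
    · have h1 := hmain w₀ hw₀ 1 (Or.inl rfl)
      have hset : {w : ℂ | 0 < 1 * (w.re - w₀.re)} = {w : ℂ | w₀.re < w.re} := by
        ext u
        simp [sub_pos]
      rw [hset] at h1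
      have hval : (1:ℝ) * w₀.re * Real.sqrt (-(Dp w₀).re) / |w₀.im|
          = -(1 - 2*a) * Real.sqrt (-(Dp w₀).re) / (𝒜 * |w₀.im|) := by
        rw [hw₀'.1]
        field_simp
      rw [hval] at h1
      exact h1
    · have h1 := hmain w₀ hw₀ (-1) (Or.inr rfl)
      have hset : {w : ℂ | 0 < (-1:ℝ) * (w.re - w₀.re)} = {w : ℂ | w.re < w₀.re} := by
        ext u
        simp only [mem_setOf_eq, neg_one_mul, neg_pos, sub_neg]
      rw [hset] at h1
      have hval : (-1:ℝ) * w₀.re * Real.sqrt (-(Dp w₀).re) / |w₀.im|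
          = (1 - 2*a) * Real.sqrt (-(Dp w₀).re) / (𝒜 * |w₀.im|) := by
        rw [hw₀'.1]
        field_simp
      rw [hval] at h1
      exact h1
  · -- limits agree iff a = 1/2
    intro w₀ hw₀
    have hDre0 : (Dp w₀).re < 0 := ((hmem w₀).1 hw₀).2
    have hsp : 0 < Real.sqrt (-(Dp w₀).re) := Real.sqrt_pos.2 (by linarith)
    have hy0ne : w₀.im ≠ 0 := by
      have hw₀' := hw₀
      rw [hIp] at hw₀'
      obtain ⟨hA, hB⟩ := hw₀'
      intro h
      rw [h] at hB
      have : (0:ℝ) ≤ 2 * Real.sqrt (a * (1 - a)) / |𝒜| := by positivity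
      simp only [abs_zero] at hB
      linarith
    have hden : 𝒜 * |w₀.im| ≠ 0 := mul_ne_zero h𝒜0 (abs_ne_zero.2 hy0ne)
    constructor
    · intro h
      rw [div_eq_div_iff hden hden] at h
      have h2' := mul_right_cancel₀ hden h
      have h2 : (1 - 2*a) * Real.sqrt (-(Dp w₀).re) = 0 := by linarith
      rcases mul_eq_zero.1 h2 with h3 | h3
      · linarith
      · exact absurd h3 hsp.ne'
    · intro h
      rw [h]
      norm_num
  · -- a = 1/2 case
    intro ha2 G hG1 hG2
    rw [continuous_iff_continuousAt]
    intro w₀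
    have hc0 : (1 - 2*a) = 0 := by rw [ha2]; norm_num
    by_cases hcl : w₀.re = -(1 - 2*a)/𝒜 ∧ 2*Real.sqrt (a*(1-a))/|𝒜| ≤ |w₀.im|
    · obtain ⟨hx₀, hy₀⟩ := hcl
      have hbpos : 0 < 2*Real.sqrt (a*(1-a))/|𝒜| := by
        apply div_pos
        · have : 0 < Real.sqrt (a*(1-a)) := Real.sqrt_pos.2 (by nlinarith)
          linarith
        · exact abs_pos.2 h𝒜0
      have hy0ne : w₀.im ≠ 0 := by
        intro h
        rw [h] at hy₀
        simp only [abs_zero] at hy₀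
        linarith
      have hx0' : 𝒜 * w₀.re + (1 - 2*a) = 0 := by
        rw [hx₀]
        field_simp
        ring
      have hDim0' : (Dp w₀).im = 0 := by
        rw [him, hx0']
        ring
      have hDreneg : (Dp w₀).re ≤ 0 := by
        rw [hre, hx0']
        have h4 : 4*a*(1-a) ≤ 𝒜^2 * w₀.im^2 := by
          have h5 : 2*Real.sqrt (a*(1-a)) ≤ |𝒜| * |w₀.im| := by
            rw [div_le_iff₀ (abs_pos.2 h𝒜0)] at hy₀
            linarith
          nlinarith [Real.sqrt_nonneg (a*(1-a)), hb, _root_.sq_abs 𝒜, _root_.sq_abs w₀.im,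
            abs_nonneg 𝒜, abs_nonneg w₀.im]
        nlinarith
      have habsD : ‖Dp w₀‖ = -(Dp w₀).re := by
        have hDr : Dp w₀ = (((Dp w₀).re : ℝ) : ℂ) := Complex.ext (by simp) (by simp [hDim0'])
        rw [hDr, Complex.norm_real, Real.norm_eq_abs, abs_of_nonpos hDreneg, Complex.ofReal_re]
      have hx₀0 : w₀.re = 0 := by
        rw [hx₀, hc0]
        simp
      have hGw0 : G w₀ = 0 := by
        by_cases hw : w₀ ∈ Ip
        · exact hG2 w₀ hw
        · rw [hG1 w₀ hw]
          have hyeq : |w₀.im| = 2*Real.sqrt (a*(1-a))/|𝒜| := by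
            refine le_antisymm ?_ hy₀
            by_contra hlt
            push_neg at hlt
            exact hw (by rw [hIp]; exact ⟨hx₀, hlt⟩)
          have hD0 : Dp w₀ = 0 := by
            apply Complex.ext
            · rw [hre, hx0']
              have : 𝒜^2 * w₀.im^2 = 4*a*(1-a) := by
                have h5 : |𝒜| * |w₀.im| = 2*Real.sqrt (a*(1-a)) := by
                  rw [hyeq]
                  field_simp
                have h6 : (|𝒜| * |w₀.im|)^2 = (2*Real.sqrt (a*(1-a)))^2 := by rw [h5]
                rw [hb, mul_pow, _root_.sq_abs, _root_.sq_abs] at h6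
                exact h6
              rw [this]
              simp
            · rw [hDim0']
              simp
          rw [hF w₀ hy0ne, hD0, Complex.zero_cpow (by norm_num : ((1:ℂ)/2) ≠ 0)]
          simp
      rw [ContinuousAt, hGw0]
      set h : ℂ → ℝ := fun w => |w.re| * (‖Dp w‖) ^ ((1:ℝ)/2) / |w.im|
        + Real.sqrt ((‖Dp w‖ + (Dp w).re)/2) with hh
      have hhcont : ContinuousAt h w₀ := by
        apply ContinuousAt.add
        · apply ContinuousAt.div
          · apply ContinuousAt.mul
            · exact (continuous_abs.comp Complex.continuous_re).continuousAt
            · exact (Real.continuousAt_rpow_const _ _ (Or.inr (by norm_num))).comp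
                (continuous_norm.comp hDpc).continuousAt
          · exact (continuous_abs.comp Complex.continuous_im).continuousAt
          · exact abs_ne_zero.2 hy0ne
        · exact Real.continuous_sqrt.continuousAt.comp
            (((continuous_norm.comp hDpc).add
              (Complex.continuous_re.comp hDpc)).div_const 2).continuousAt
      have hh0 : h w₀ = 0 := by
        rw [hh]
        simp only [hx₀0, abs_zero, zero_mul, zero_div, zero_add]
        rw [habsD]
        simp
      have hev : ∀ᶠ w in nhds w₀, ‖G w‖ ≤ h w := by
        filter_upwards [hopenim.mem_nhds (show w₀ ∈ {u : ℂ | u.im ≠ 0} from hy0ne)] with w hw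
        by_cases hwIp : w ∈ Ip
        · rw [hG2 w hwIp]
          simp only [norm_zero]
          rw [hh]
          positivity
        · rw [hG1 w hwIp, hF w hw]
          have hmulim : ((starRingEnd ℂ) w * (Dp w ^ ((1:ℂ)/2))).im
              = w.re * (Dp w ^ ((1:ℂ)/2)).im - w.im * (Dp w ^ ((1:ℂ)/2)).re := by
            simp [Complex.mul_im]
            ring
          have hre_eq : (Dp w ^ ((1:ℂ)/2)).re
              = Real.sqrt ((‖Dp w‖ + (Dp w).re)/2) := by
            rw [one_div, Complex.cpow_inv_two_re]
          have hb1 : |(Dp w ^ ((1:ℂ)/2)).im| ≤ ‖Dp w‖ ^ ((1:ℝ)/2) := by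
            refine le_trans (Complex.abs_im_le_norm _) ?_
            have := Complex.norm_cpow_le (Dp w) ((1:ℂ)/2)
            simpa using this
          have hnum : |((starRingEnd ℂ) w * (Dp w ^ ((1:ℂ)/2))).im|
              ≤ |w.re| * ‖Dp w‖ ^ ((1:ℝ)/2)
                + |w.im| * Real.sqrt ((‖Dp w‖ + (Dp w).re)/2) := by
            rw [hmulim]
            refine le_trans (abs_sub _ _) ?_
            rw [abs_mul, abs_mul]
            have h1 : |w.re| * |(Dp w ^ ((1:ℂ)/2)).im| ≤ |w.re| * ‖Dp w‖ ^ ((1:ℝ)/2) :=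
              mul_le_mul_of_nonneg_left hb1 (abs_nonneg _)
            have h2 : |(Dp w ^ ((1:ℂ)/2)).re| = Real.sqrt ((‖Dp w‖ + (Dp w).re)/2) := by
              rw [hre_eq, _root_.abs_of_nonneg (Real.sqrt_nonneg _)]
            rw [h2]
            linarith
          rw [Real.norm_eq_abs, abs_div]
          rw [hh]
          have himpos : 0 < |w.im| := abs_pos.2 hw
          calc |((starRingEnd ℂ) w * Dp w ^ ((1:ℂ)/2)).im| / |w.im|
              ≤ (|w.re| * ‖Dp w‖ ^ ((1:ℝ)/2)
                + |w.im| * Real.sqrt ((‖Dp w‖ + (Dp w).re)/2)) / |w.im| := by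
                gcongr
            _ = |w.re| * ‖Dp w‖ ^ ((1:ℝ)/2) / |w.im|
                + Real.sqrt ((‖Dp w‖ + (Dp w).re)/2) := by
                rw [add_div, mul_div_assoc, mul_div_cancel_left₀ _ himpos.ne']
      have hht : Tendsto h (nhds w₀) (nhds 0) := by
        have := hhcont.tendsto
        rwa [hh0] at this
      exact squeeze_zero_norm' hev hht
    · have hCclosed : IsClosed {w : ℂ | w.re = -(1-2*a)/𝒜 ∧ 2*Real.sqrt (a*(1-a))/|𝒜| ≤ |w.im|} :=
        (isClosed_eq Complex.continuous_re continuous_const).inter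
          (isClosed_le continuous_const (continuous_abs.comp Complex.continuous_im))
      have hopenC : IsOpen {w : ℂ | w.re = -(1-2*a)/𝒜 ∧ 2*Real.sqrt (a*(1-a))/|𝒜| ≤ |w.im|}ᶜ :=
        hCclosed.isOpen_compl
      have hev : G =ᶠ[nhds w₀] F := by
        filter_upwards [hopenC.mem_nhds hcl] with u hu
        apply hG1
        intro hu'
        apply hu
        rw [hIp] at hu'
        exact ⟨hu'.1, hu'.2.le⟩
      rw [continuousAt_congr hev]
      have hw₀Ip : w₀ ∉ Ip := by
        intro h
        apply hcl
        rw [hIp] at h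
        exact ⟨h.1, h.2.le⟩
      by_cases him0 : w₀.im = 0
      · exact hFcont_real w₀ him0
      · exact hFcont_nonreal w₀ him0 hw₀Ip
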